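/- For a complete lattice L, if f : L → L is sup-preserving and g : L → L is any function, then (f ∘ g)^∨ = f ∘ g^∨. Consequently, tight endomaps of L are closed under composition. -/
import Mathlib


/-- The Raney transform f^∨. -/
def raneV {L : Type*} [CompleteLattice L] (f : L → L) (x : L) : L :=
  sSup (f '' {t | ¬ x ≤ t})

/-- The Raney transform f^∧. -/
def raneI {L : Type*} [CompleteLattice L] (f : L → L) (x : L) : L :=
  sInf (f '' {t | ¬ t ≤ x})

/-- A map is tight if f = (f^∧)^∨. -/
def Tight {L : Type*} [CompleteLattice L] (f : L → L) : Prop :=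
  raneV (raneI f) = f

private lemma raneV_mono' {L : Type*} [CompleteLattice L] {f g : L → L}
    (h : ∀ t, f t ≤ g t) (x : L) : raneV f x ≤ raneV g x := by
  apply sSup_le
  rintro y ⟨t, ht, rfl⟩
  exact (h t).trans (le_sSup ⟨t, ht, rfl⟩)

private lemma raneV_raneI_le {L : Type*} [CompleteLattice L] (f : L → L) (x : L) :
    raneV (raneI f) x ≤ f x := by
  apply sSup_le
  rintro y ⟨t, ht, rfl⟩
  exact sInf_le ⟨x, ht, rfl⟩

private lemma le_raneI_raneV {L : Type*} [CompleteLattice L] (f : L → L) (x : L) :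
    f x ≤ raneI (raneV f) x := by
  apply le_sInf
  rintro y ⟨t, ht, rfl⟩
  exact le_sSup ⟨x, ht, rfl⟩

private lemma tight_raneV {L : Type*} [CompleteLattice L] (f : L → L) :
    Tight (raneV f) := by
  funext x
  exact le_antisymm (raneV_raneI_le _ x) (raneV_mono' (le_raneI_raneV f) x)

private lemma raneV_sup {L : Type*} [CompleteLattice L] (f : L → L) (s : Set L) :
    raneV f (sSup s) = sSup (raneV f '' s) := by
  apply le_antisymm
  · apply sSup_le
    rintro y ⟨t, ht, rfl⟩
    obtain ⟨a, ha, hat⟩ : ∃ a ∈ s, ¬ a ≤ t := by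
      by_contra h
      push_neg at h
      exact ht (sSup_le h)
    calc f t ≤ raneV f a := le_sSup ⟨t, hat, rfl⟩
      _ ≤ sSup (raneV f '' s) := le_sSup (Set.mem_image_of_mem (raneV f) ha)
  · apply sSup_le
    rintro y ⟨a, ha, rfl⟩
    apply sSup_le
    rintro y ⟨t, ht, rfl⟩
    exact le_sSup ⟨t, fun h => ht ((le_sSup ha).trans h), rfl⟩

private lemma raneV_comp {L : Type*} [CompleteLattice L] (f g : L → L)
    (hf : ∀ s : Set L, f (sSup s) = sSup (f '' s)) :
    raneV (f ∘ g) = f ∘ raneV g := by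
  funext x
  show sSup ((f ∘ g) '' _) = f (sSup _)
  rw [Set.image_comp, hf]

theorem stmt16 {L : Type*} [CompleteLattice L] :
    -- if f is sup-preserving then (f ∘ g)^∨ = f ∘ g^∨:
    (∀ f g : L → L, (∀ s : Set L, f (sSup s) = sSup (f '' s)) →
        raneV (f ∘ g) = f ∘ raneV g) ∧
    -- consequently tight maps are closed under composition:
    (∀ f g : L → L, Tight f → Tight g → Tight (f ∘ g)) := by
  refine ⟨raneV_comp, ?_⟩
  intro f g hf hg
  have hfs : ∀ s : Set L, f (sSup s) = sSup (f '' s) := by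
    intro s
    rw [← hf, raneV_sup, hf]
  have : f ∘ g = raneV (f ∘ raneI g) := by
    rw [raneV_comp f (raneI g) hfs, hg]
  rw [this]
  exact tight_raneV _
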